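/- Let p = (a_{i_1}, a_{i_2}, …, a_{i_{d+1}}) be any path in Γ_L and let m be an integer divisible by N(p) = lcm(n_{i_1},…,n_{i_{d+1}}). Then the weighted path p^m = e_{i_1,i_2}^m e_{i_2,i_3}^m ⋯ e_{i_d,i_{d+1}}^m belongs to the subgroup of G_Γ generated by {x_{m',i} : a_i ∈ V(Γ_L), 0 ≤ m' < N}. -/

import Mathlib

open scoped commutatorElement

/-- Relators of the right-angled Artin group: commutators of adjacent vertices. -/
def raagRels {V : Type} (Γ : SimpleGraph V) : Set (FreeGroup V) :=
  {g | ∃ i j : V, Γ.Adj i j ∧ g = ⁅FreeGroup.of i, FreeGroup.of j⁆}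

/-- The right-angled Artin group of a simple graph. -/
abbrev RAAG {V : Type} (Γ : SimpleGraph V) : Type := PresentedGroup (raagRels Γ)

/-- The canonical generator of the RAAG corresponding to a vertex. -/
def raagGen {V : Type} (Γ : SimpleGraph V) (i : V) : RAAG Γ := PresentedGroup.of i

/-- The coset representative `w_m = a_1^{m r_1} ⋯ a_ℓ^{m r_ℓ}`. -/
def wrep {s : ℕ} (Γ : SimpleGraph (Fin s)) (ℓ : ℕ) (r : Fin s → ℤ) (m : ℤ) : RAAG Γ :=
  (((List.finRange s).take ℓ).map (fun i => raagGen Γ i ^ (m * r i))).prod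

/-- The Reidemeister–Schreier generator `x_{m,i} = w_m a_i w_{m+n_i}^{-1}`. -/
def xgen {s : ℕ} (Γ : SimpleGraph (Fin s)) (φ : RAAG Γ →* ℤ) (ℓ : ℕ) (r : Fin s → ℤ)
    (m : ℤ) (i : Fin s) : RAAG Γ :=
  wrep Γ ℓ r m * raagGen Γ i * (wrep Γ ℓ r (m + φ (raagGen Γ i)))⁻¹

/-- The weighted edge `e_{j,k}^m = a_j^{m/n_j} a_k^{-m/n_k}` (for `m` divisible by
`lcm(n_j, n_k)`, integer division is exact). -/
def wedge {s : ℕ} (Γ : SimpleGraph (Fin s)) (φ : RAAG Γ →* ℤ) (m : ℤ) (j k : Fin s) :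
    RAAG Γ :=
  raagGen Γ j ^ (m / φ (raagGen Γ j)) * (raagGen Γ k ^ (m / φ (raagGen Γ k)))⁻¹

/-- The weighted path `p^m`: the product of the weighted edges `e^m` along the
consecutive pairs of vertices of `p`. -/
def weightedPath {s : ℕ} (Γ : SimpleGraph (Fin s)) (φ : RAAG Γ →* ℤ) (m : ℤ)
    (p : List (Fin s)) : RAAG Γ :=
  ((p.zip p.tail).map fun q => wedge Γ φ m q.1 q.2).prod

/-- `N(p)`, the least common multiple of the `n_i` over the vertices of the path `p`. -/
def pathLcm {s : ℕ} (Γ : SimpleGraph (Fin s)) (φ : RAAG Γ →* ℤ) (p : List (Fin s)) : ℕ :=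
  p.foldr (fun i acc => Nat.lcm (φ (raagGen Γ i)).toNat acc) 1

/-- `N`, the least common multiple of the `n_i` over the vertices of `Γ_L`
(the vertices with `n_i ≠ 0`). -/
def bigN {s : ℕ} (Γ : SimpleGraph (Fin s)) (φ : RAAG Γ →* ℤ) : ℕ :=
  (Finset.univ.filter fun i : Fin s => φ (raagGen Γ i) ≠ 0).lcm
    fun i => (φ (raagGen Γ i)).toNat

lemma raag_comm {V : Type} {Γ : SimpleGraph V} {j k : V} (h : Γ.Adj j k) :
    Commute (raagGen Γ j) (raagGen Γ k) := by
  rw [← commutatorElement_eq_one_iff_commute]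
  have h1 : (PresentedGroup.mk (raagRels Γ) ⁅FreeGroup.of j, FreeGroup.of k⁆) = 1 :=
    (QuotientGroup.eq_one_iff _).mpr (Subgroup.subset_normalClosure ⟨j, k, h, rfl⟩)
  rw [map_commutatorElement] at h1
  exact h1

lemma wrep_zero {s : ℕ} (Γ : SimpleGraph (Fin s)) (ℓ : ℕ) (r : Fin s → ℤ) :
    wrep Γ ℓ r 0 = 1 := by simp [wrep]

lemma tele {s : ℕ} (Γ : SimpleGraph (Fin s)) (φ : RAAG Γ →* ℤ) (ℓ : ℕ) (r : Fin s → ℤ)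
    (i : Fin s) : ∀ q : ℕ,
    ((List.range q).map (fun t : ℕ => xgen Γ φ ℓ r (t * φ (raagGen Γ i)) i)).prod
      = raagGen Γ i ^ q * (wrep Γ ℓ r (q * φ (raagGen Γ i)))⁻¹
  | 0 => by simp [wrep_zero]
  | (q+1) => by
      rw [List.range_succ, List.map_append, List.prod_append, tele Γ φ ℓ r i q]
      have harg : (q : ℤ) * φ (raagGen Γ i) + φ (raagGen Γ i)
          = ((q+1 : ℕ) : ℤ) * φ (raagGen Γ i) := by push_cast; ring
      simp only [List.map_cons, List.map_nil, List.prod_cons, List.prod_nil, mul_one, xgen, harg]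
      rw [pow_succ]
      group

lemma bigN_pos {s : ℕ} (Γ : SimpleGraph (Fin s)) (φ : RAAG Γ →* ℤ)
    (hn0 : ∀ i, 0 ≤ φ (raagGen Γ i)) : 0 < bigN Γ φ := by
  rw [Nat.pos_iff_ne_zero, Ne, bigN, Finset.lcm_eq_zero_iff]
  rintro ⟨i, hi, h0⟩
  simp only [Finset.mem_coe, Finset.mem_filter, Finset.coe_filter, Finset.mem_univ, true_and, Set.mem_setOf_eq] at hi
  have h0' : (φ (raagGen Γ i)).toNat = 0 := h0
  have := hn0 i
  omega

/-- Telescoped product membership: `a_i^q * w_{q n_i}⁻¹` is in the closure when `q n_i ≤ N`. -/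
lemma pow_wrep_mem {s : ℕ} (Γ : SimpleGraph (Fin s)) (φ : RAAG Γ →* ℤ)
    (n : Fin s → ℤ) (hn : ∀ i, n i = φ (raagGen Γ i)) (hn0 : ∀ i, 0 ≤ n i)
    (ℓ : ℕ) (r : Fin s → ℤ) (i : Fin s) (hi : n i ≠ 0) (q : ℕ)
    (hq : (q : ℤ) * n i ≤ (bigN Γ φ : ℤ)) :
    raagGen Γ i ^ q * (wrep Γ ℓ r ((q : ℤ) * n i))⁻¹ ∈ Subgroup.closure
      {g : RAAG Γ | ∃ (m' : ℤ) (i : Fin s),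
        n i ≠ 0 ∧ 0 ≤ m' ∧ m' < (bigN Γ φ : ℤ) ∧ g = xgen Γ φ ℓ r m' i} := by
  have hni : 0 < n i := lt_of_le_of_ne (hn0 i) (Ne.symm hi)
  rw [hn i] at hq hni ⊢
  rw [← tele Γ φ ℓ r i q]
  apply Subgroup.list_prod_mem
  intro x hx
  rw [List.mem_map] at hx
  obtain ⟨t, ht, rfl⟩ := hx
  rw [List.mem_range] at ht
  apply Subgroup.subset_closure
  refine ⟨(t : ℤ) * φ (raagGen Γ i), i, hi, ?_, ?_, rfl⟩
  · positivity
  · have h1 : (t : ℤ) + 1 ≤ (q : ℤ) := by exact_mod_cast ht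
    nlinarith [hni]

lemma wedge_mem {s : ℕ} (Γ : SimpleGraph (Fin s)) (φ : RAAG Γ →* ℤ)
    (n : Fin s → ℤ) (hn : ∀ i, n i = φ (raagGen Γ i)) (hn0 : ∀ i, 0 ≤ n i)
    (ℓ : ℕ) (r : Fin s → ℤ)
    (j k : Fin s) (hadj : Γ.Adj j k) (hj : n j ≠ 0) (hk : n k ≠ 0)
    (m : ℤ) (hL : ((Nat.lcm (n j).toNat (n k).toNat : ℕ) : ℤ) ∣ m) :
    wedge Γ φ m j k ∈ Subgroup.closure
      {g : RAAG Γ | ∃ (m' : ℤ) (i : Fin s),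
        n i ≠ 0 ∧ 0 ≤ m' ∧ m' < (bigN Γ φ : ℤ) ∧ g = xgen Γ φ ℓ r m' i} := by
  set S := {g : RAAG Γ | ∃ (m' : ℤ) (i : Fin s),
        n i ≠ 0 ∧ 0 ≤ m' ∧ m' < (bigN Γ φ : ℤ) ∧ g = xgen Γ φ ℓ r m' i} with hS
  set L : ℕ := Nat.lcm (n j).toNat (n k).toNat with hLdef
  have hnj : 0 < n j := lt_of_le_of_ne (hn0 j) (Ne.symm hj)
  have hnk : 0 < n k := lt_of_le_of_ne (hn0 k) (Ne.symm hk)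
  have htj := Int.toNat_of_nonneg (hn0 j)
  have htk := Int.toNat_of_nonneg (hn0 k)
  -- L divides bigN and bigN positive
  have hn0' : ∀ i, 0 ≤ φ (raagGen Γ i) := fun i => (hn i) ▸ hn0 i
  have hjN : (n j).toNat ∣ bigN Γ φ := by
    rw [hn j]; exact Finset.dvd_lcm (by simp [← hn j, hj])
  have hkN : (n k).toNat ∣ bigN Γ φ := by
    rw [hn k]; exact Finset.dvd_lcm (by simp [← hn k, hk])
  have hLN : L ∣ bigN Γ φ := Nat.lcm_dvd hjN hkN
  have hLle : L ≤ bigN Γ φ := Nat.le_of_dvd (bigN_pos Γ φ hn0') hLN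
  set qj : ℕ := L / (n j).toNat with hqjdef
  set qk : ℕ := L / (n k).toNat with hqkdef
  have hqj : qj * (n j).toNat = L := Nat.div_mul_cancel (Nat.dvd_lcm_left _ _)
  have hqk : qk * (n k).toNat = L := Nat.div_mul_cancel (Nat.dvd_lcm_right _ _)
  have hqjZ : (qj : ℤ) * n j = (L : ℤ) := by rw [← htj]; exact_mod_cast congrArg (Nat.cast : ℕ → ℤ) hqj
  have hqkZ : (qk : ℤ) * n k = (L : ℤ) := by rw [← htk]; exact_mod_cast congrArg (Nat.cast : ℕ → ℤ) hqk
  -- membership of the two telescoped products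
  have hPj : raagGen Γ j ^ qj * (wrep Γ ℓ r ((qj : ℤ) * n j))⁻¹ ∈ Subgroup.closure S :=
    pow_wrep_mem Γ φ n hn hn0 ℓ r j hj qj (by rw [hqjZ]; exact_mod_cast hLle)
  have hPk : raagGen Γ k ^ qk * (wrep Γ ℓ r ((qk : ℤ) * n k))⁻¹ ∈ Subgroup.closure S :=
    pow_wrep_mem Γ φ n hn hn0 ℓ r k hk qk (by rw [hqkZ]; exact_mod_cast hLle)
  rw [hqjZ] at hPj
  rw [hqkZ] at hPk
  -- the weighted edge at level L
  have heL : wedge Γ φ (L : ℤ) j k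
      = (raagGen Γ j ^ qj * (wrep Γ ℓ r (L : ℤ))⁻¹) *
        (raagGen Γ k ^ qk * (wrep Γ ℓ r (L : ℤ))⁻¹)⁻¹ := by
    have hdj : (L : ℤ) / φ (raagGen Γ j) = (qj : ℤ) := by
      rw [← hn j, ← hqjZ, Int.mul_ediv_cancel _ hj]
    have hdk : (L : ℤ) / φ (raagGen Γ k) = (qk : ℤ) := by
      rw [← hn k, ← hqkZ, Int.mul_ediv_cancel _ hk]
    rw [wedge, hdj, hdk, zpow_natCast, zpow_natCast]
    group
  have heLmem : wedge Γ φ (L : ℤ) j k ∈ Subgroup.closure S := by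
    rw [heL]; exact mul_mem hPj (inv_mem hPk)
  -- wedge at m is a power of wedge at L
  obtain ⟨c, hc⟩ := hL
  have hLne : (L : ℤ) ≠ 0 := by
    have : 0 < L := Nat.lcm_pos (by omega) (by omega)
    exact_mod_cast this.ne'
  have hkey : wedge Γ φ m j k = (wedge Γ φ (L : ℤ) j k) ^ c := by
    have hdj : (L : ℤ) / φ (raagGen Γ j) = (qj : ℤ) := by
      rw [← hn j, ← hqjZ, Int.mul_ediv_cancel _ hj]
    have hdk : (L : ℤ) / φ (raagGen Γ k) = (qk : ℤ) := by
      rw [← hn k, ← hqkZ, Int.mul_ediv_cancel _ hk]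
    have hmj : m / φ (raagGen Γ j) = (qj : ℤ) * c := by
      rw [← hn j, hc, ← hqjZ, mul_comm (qj : ℤ) (n j), mul_assoc,
        Int.mul_ediv_cancel_left _ hj]
    have hmk : m / φ (raagGen Γ k) = (qk : ℤ) * c := by
      rw [← hn k, hc, ← hqkZ, mul_comm (qk : ℤ) (n k), mul_assoc,
        Int.mul_ediv_cancel_left _ hk]
    have hcomm : Commute (raagGen Γ j ^ (qj : ℤ)) ((raagGen Γ k ^ (qk : ℤ))⁻¹) :=
      ((raag_comm hadj).zpow_zpow _ _).inv_right
    rw [wedge, wedge, hdj, hdk, hmj, hmk, hcomm.mul_zpow, ← zpow_mul, inv_zpow, ← zpow_mul]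
  rw [hkey]
  exact Subgroup.zpow_mem _ heLmem c

/-- For any path `p` in `Γ_L` and any integer `m` divisible by
`N(p)`, the weighted path `p^m` lies in the subgroup of `G_Γ` generated by
`{x_{m',i} : a_i ∈ V(Γ_L), 0 ≤ m' < N}`. -/
theorem weighted_path_mem
    {s : ℕ} (Γ : SimpleGraph (Fin s)) (φ : RAAG Γ →* ℤ)
    (hsurj : Function.Surjective φ)
    (n : Fin s → ℤ) (hn : ∀ i, n i = φ (raagGen Γ i)) (hn0 : ∀ i, 0 ≤ n i)
    (ℓ : ℕ) (hℓ1 : 1 ≤ ℓ) (hℓs : ℓ ≤ s) (r : Fin s → ℤ)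
    (hr : ∀ i : Fin s, (i : ℕ) < ℓ → r i ≠ 0 ∧ n i ≠ 0)
    (hsum : (((List.finRange s).take ℓ).map (fun i => r i * n i)).sum = 1)
    (p : List (Fin s)) (hp : p ≠ [])
    (hchain : p.Chain' Γ.Adj) (hpL : ∀ i ∈ p, n i ≠ 0)
    (m : ℤ) (hm : (pathLcm Γ φ p : ℤ) ∣ m) :
    weightedPath Γ φ m p ∈ Subgroup.closure
      {g : RAAG Γ | ∃ (m' : ℤ) (i : Fin s),
        n i ≠ 0 ∧ 0 ≤ m' ∧ m' < (bigN Γ φ : ℤ) ∧ g = xgen Γ φ ℓ r m' i} := by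
  clear hp hsurj hℓ1 hℓs hr hsum
  revert hchain hpL hm
  induction p with
  | nil =>
    intro _ _ _
    simp only [weightedPath, List.zip_nil_left, List.map_nil, List.prod_nil]
    exact one_mem _
  | cons j tl ih =>
    intro hchain hpL hm
    cases tl with
    | nil =>
      simp only [weightedPath, List.tail_cons, List.zip_nil_right, List.map_nil,
        List.prod_nil]
      exact one_mem _
    | cons k rest =>
      have hadj : Γ.Adj j k := (List.isChain_cons_cons.mp hchain).1
      have hchain2 : (k :: rest).Chain' Γ.Adj := (List.isChain_cons_cons.mp hchain).2
      have hpL2 : ∀ i ∈ (k :: rest), n i ≠ 0 := fun i hi => hpL i (List.mem_cons_of_mem _ hi)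
      have hunfold : pathLcm Γ φ (j :: k :: rest)
          = Nat.lcm (φ (raagGen Γ j)).toNat (pathLcm Γ φ (k :: rest)) := rfl
      have hm2 : (pathLcm Γ φ (k :: rest) : ℤ) ∣ m := by
        refine dvd_trans (Int.natCast_dvd_natCast.mpr ?_) hm
        rw [hunfold]; exact Nat.dvd_lcm_right _ _
      have hedge : ((Nat.lcm (n j).toNat (n k).toNat : ℕ) : ℤ) ∣ m := by
        refine dvd_trans (Int.natCast_dvd_natCast.mpr ?_) hm
        refine Nat.lcm_dvd ?_ ?_
        · rw [hn j, hunfold]; exact Nat.dvd_lcm_left _ _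
        · rw [hn k, hunfold]
          exact dvd_trans (Nat.dvd_lcm_left _ _) (Nat.dvd_lcm_right _ _)
      have hW : weightedPath Γ φ m (j :: k :: rest)
          = wedge Γ φ m j k * weightedPath Γ φ m (k :: rest) := by
        simp [weightedPath]
      rw [hW]
      exact mul_mem
        (wedge_mem Γ φ n hn hn0 ℓ r j k hadj (hpL j List.mem_cons_self)
          (hpL k (List.mem_cons_of_mem _ List.mem_cons_self)) m hedge)
        (ih hchain2 hpL2 hm2)
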